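/- arXiv:1003.4491 — 3 statements merged into one kernel-verified Lean document; each statement's English description precedes it below -/
import Mathlib

section
/- (Jacobi triple product) For |p|<1 and x ∈ ℂ*, the series ∑_{n∈ℤ} p^{n(n-1)/2}(-x)^n converges and equals (p;p)_∞ · θ_p(x), where θ_p(x) = (x;p)_∞(p/x;p)_∞. -/
open scoped BigOperators

/-- The infinite q-Pochhammer symbol `(x;q)_∞ = ∏_{j≥0} (1 - x q^j)`. -/
noncomputable def pochInf (x q : ℂ) : ℂ := ∏' j : ℕ, (1 - x * q ^ j)

/-- The theta function `θ_p(x) = (x;p)_∞ (p/x;p)_∞`. -/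
noncomputable def theta (p x : ℂ) : ℂ := pochInf x p * pochInf (p / x) p

open Finset Filter Topology

noncomputable def Qm (q : ℂ) (m : ℕ) : ℂ := ∏ j ∈ range m, (1 - q ^ (j + 1))
noncomputable def gb (q : ℂ) (m k : ℕ) : ℂ := Qm q m / (Qm q k * Qm q (m - k))




/-- Multipliability of the pochhammer-type products. -/
lemma multipliable_poch (a q : ℂ) (hq : ‖q‖ < 1) :
    Multipliable (fun j : ℕ => 1 - a * q ^ j) := by
  by_cases hz : ∃ j, 1 - a * q ^ j = 0
  · obtain ⟨j0, hj0⟩ := hz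
    refine ⟨0, ?_⟩
    have : ∀ᶠ s : Finset ℕ in atTop, ∏ j ∈ s, (1 - a * q ^ j) = 0 := by
      filter_upwards [Filter.eventually_ge_atTop {j0}] with s hs
      exact Finset.prod_eq_zero (hs (Finset.mem_singleton_self j0)) hj0
    exact Tendsto.congr' (this.mono fun s h => h.symm) tendsto_const_nhds
  · push_neg at hz
    apply Complex.multipliable_of_summable_log
    -- Summable (fun j => Complex.log (1 - a * q ^ j))
    have hgeo : Summable (fun j : ℕ => ‖a‖ * ‖q‖ ^ j) :=
      (summable_geometric_of_lt_one (norm_nonneg q) hq).mul_left _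
    apply Summable.of_norm
    have hb : ∀ᶠ j : ℕ in atTop, ‖Complex.log (1 - a * q ^ j)‖ ≤
        (3/2) * (‖a‖ * ‖q‖ ^ j) := by
      have h0 : Tendsto (fun j : ℕ => ‖a‖ * ‖q‖ ^ j) atTop (𝓝 0) := by
        simpa using (tendsto_pow_atTop_nhds_zero_of_lt_one (norm_nonneg q) hq).const_mul
          (‖a‖)
      filter_upwards [h0.eventually_le_const (by norm_num : (0:ℝ) < 1/2)] with j hj
      have : ‖-(a * q ^ j)‖ ≤ 1/2 := by
        simpa [norm_neg, map_mul, map_pow] using hj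
      simpa [sub_eq_add_neg, norm_neg, map_mul, map_pow] using
        Complex.norm_log_one_add_half_le_self this
    obtain ⟨J, hJ⟩ := hb.exists_forall_of_atTop
    apply (summable_nat_add_iff J).mp
    apply Summable.of_nonneg_of_le (fun j => norm_nonneg _) (fun j => hJ (j + J) (by omega))
    exact (((summable_nat_add_iff J).mpr hgeo).mul_left (3/2))


/-- finite q-Pochhammer `(q;q)_m`. -/

lemma Qm_ne_zero {q : ℂ} (hq : ‖q‖ < 1) (m : ℕ) : Qm q m ≠ 0 := by
  apply Finset.prod_ne_zero_iff.mpr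
  intro j _
  intro h
  have h1 : (1 : ℂ) = q ^ (j+1) := by linear_combination h
  have : ‖q ^ (j+1)‖ < 1 := by
    rw [norm_pow]
    calc ‖q‖ ^ (j+1) ≤ ‖q‖ ^ 1 :=
          pow_le_pow_of_le_one (norm_nonneg q) hq.le (by omega)
      _ < 1 := by simpa using hq
  rw [← h1] at this
  simp at this

/-- Weierstrass inequality. -/
lemma one_sub_sum_le_prod (s : Finset ℕ) (a : ℕ → ℝ) (h0 : ∀ i ∈ s, 0 ≤ a i)
    (h1 : ∀ i ∈ s, a i ≤ 1) : 1 - ∑ i ∈ s, a i ≤ ∏ i ∈ s, (1 - a i) := by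
  classical
  induction s using Finset.cons_induction with
  | empty => simp
  | cons i s his ih =>
    rw [Finset.prod_cons, Finset.sum_cons]
    have hi0 := h0 i (Finset.mem_cons_self i s)
    have hi1 := h1 i (Finset.mem_cons_self i s)
    have ihs := ih (fun j hj => h0 j (Finset.mem_cons_of_mem hj))
      (fun j hj => h1 j (Finset.mem_cons_of_mem hj))
    have hs0 : (0:ℝ) ≤ ∑ j ∈ s, a j := Finset.sum_nonneg fun j hj => h0 j (Finset.mem_cons_of_mem hj)
    nlinarith [ihs]

/-- Uniform lower bound for the partial products. -/
lemma Qm_lower_bound {q : ℂ} (hq : ‖q‖ < 1) :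
    ∃ c : ℝ, 0 < c ∧ ∀ m, c ≤ ‖Qm q m‖ := by
  set t := ‖q‖ with ht
  have ht0 : 0 ≤ t := norm_nonneg q
  -- tail sums tend to 0
  have hsum : Summable (fun j : ℕ => t ^ (j + 1)) := by
    simpa [pow_succ] using (summable_geometric_of_lt_one ht0 hq).mul_right t
  have htail : Tendsto (fun J : ℕ => ∑' k : ℕ, t ^ (k + J + 1)) atTop (𝓝 0) :=
    by simpa using tendsto_sum_nat_add (fun j : ℕ => t ^ (j + 1))
  obtain ⟨J, hJ⟩ : ∃ J : ℕ, ∑' k : ℕ, t ^ (k + J + 1) ≤ 1/2 := by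
    obtain ⟨J, hJ⟩ := (htail.eventually_le_const (by norm_num : (0:ℝ) < 1/2)).exists
    exact ⟨J, hJ⟩
  have hlt1 : ∀ j : ℕ, t ^ (j + 1) < 1 := fun j => pow_lt_one₀ ht0 hq (by omega)
  set cJ : ℝ := ∏ j ∈ range J, (1 - t ^ (j + 1)) with hcJ
  have hcJ0 : 0 < cJ := Finset.prod_pos fun j _ => by linarith [hlt1 j]
  refine ⟨cJ * (1/2), by positivity, fun m => ?_⟩
  have habs : ∀ m, (∏ j ∈ range m, (1 - t ^ (j+1))) ≤ ‖Qm q m‖ := by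
    intro m
    rw [Qm, norm_prod]
    apply Finset.prod_le_prod
    · intro j _; linarith [hlt1 j]
    · intro j _
      calc 1 - t ^ (j+1) = 1 - ‖q ^ (j+1)‖ := by rw [norm_pow]
        _ ≤ ‖1 - q ^ (j+1)‖ := by
            have := norm_sub_norm_le (1:ℂ) (q ^ (j+1))
            simpa using this
  refine le_trans ?_ (habs m)
  by_cases hmJ : m ≤ J
  · have hsplit : (∏ j ∈ range m, (1 - t ^ (j+1))) * ∏ j ∈ Ico m J, (1 - t ^ (j+1)) = cJ := by
      rw [hcJ]; exact Finset.prod_range_mul_prod_Ico _ hmJ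
    have h1 : ∏ j ∈ Ico m J, (1 - t ^ (j+1)) ≤ 1 :=
      Finset.prod_le_one (fun j _ => by linarith [hlt1 j]) (fun j _ => by
        linarith [pow_nonneg ht0 (j+1)])
    have h2 : (0:ℝ) ≤ ∏ j ∈ range m, (1 - t ^ (j+1)) :=
      Finset.prod_nonneg fun j _ => by linarith [hlt1 j]
    nlinarith
  · push_neg at hmJ
    rw [← Finset.prod_range_mul_prod_Ico _ (le_of_lt hmJ)]
    have h2 : (1:ℝ)/2 ≤ ∏ j ∈ Ico J m, (1 - t ^ (j+1)) := by
      have hW := one_sub_sum_le_prod (Finset.Ico J m) (fun j => t ^ (j+1))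
        (fun j _ => pow_nonneg ht0 _) (fun j _ => (hlt1 j).le)
      have hsum2 : Summable (fun k : ℕ => t ^ (k + J + 1)) := by
        exact_mod_cast (summable_nat_add_iff J).mpr hsum
      have : ∑ j ∈ Ico J m, t ^ (j+1) ≤ ∑' k : ℕ, t ^ (k + J + 1) := by
        rw [Finset.sum_Ico_eq_sum_range]
        exact le_trans (le_of_eq (Finset.sum_congr rfl fun k _ => by ring_nf))
          (Summable.sum_le_tsum _ (fun k _ => pow_nonneg ht0 _) hsum2)
      linarith
    have h3 : (0:ℝ) ≤ ∏ j ∈ Ico J m, (1 - t ^ (j+1)) :=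
      Finset.prod_nonneg fun j _ => by linarith [hlt1 j]
    calc cJ * (1/2) ≤ cJ * ∏ j ∈ Ico J m, (1 - t ^ (j+1)) := by nlinarith
      _ = _ := rfl





lemma Qm_succ (q : ℂ) (m : ℕ) : Qm q (m + 1) = Qm q m * (1 - q ^ (m + 1)) :=
  Finset.prod_range_succ _ m

lemma tri_succ (j : ℕ) : (j + 1) * j / 2 = j * (j - 1) / 2 + j := by
  cases j with
  | zero => simp
  | succ k =>
    have h : (k + 2) * (k + 1) = (k + 1) * k + 2 * (k + 1) := by ring
    rw [h]
    simp only [Nat.add_sub_cancel]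
    omega

lemma gb_zero (q : ℂ) (hq : ‖q‖ < 1) (m : ℕ) : gb q m 0 = 1 := by
  simp only [gb, Nat.sub_zero]
  rw [show Qm q 0 = 1 from Finset.prod_range_zero _, one_mul,
    div_self (Qm_ne_zero hq m)]

lemma gb_self (q : ℂ) (hq : ‖q‖ < 1) (m : ℕ) : gb q m m = 1 := by
  simp only [gb, Nat.sub_self]
  rw [show Qm q 0 = 1 from Finset.prod_range_zero _, mul_one,
    div_self (Qm_ne_zero hq m)]

lemma one_sub_pow_ne_zero {q : ℂ} (hq : ‖q‖ < 1) (j : ℕ) :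
    (1 : ℂ) - q ^ (j + 1) ≠ 0 := by
  intro h
  have h1 : ‖q ^ (j + 1)‖ < 1 := by
    rw [norm_pow]
    calc ‖q‖ ^ (j + 1) ≤ ‖q‖ ^ 1 :=
          pow_le_pow_of_le_one (norm_nonneg q) hq.le (by omega)
      _ < 1 := by simpa using hq
  have h2 : (1 : ℂ) = q ^ (j + 1) := by linear_combination h
  rw [← h2] at h1
  simp at h1

/-- q-Pascal rule. -/
lemma gb_pascal (q : ℂ) (hq : ‖q‖ < 1) {m k : ℕ} (hk : k < m) :
    gb q (m + 1) (k + 1) = gb q m (k + 1) + q ^ (m - k) * gb q m k := by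
  have h1 : m + 1 - (k + 1) = m - k := by omega
  have h3 : m - (k + 1) = m - k - 1 := by omega
  have h2 : m - k = (m - k - 1) + 1 := by omega
  unfold gb
  rw [h1, h3, Qm_succ q m, h2, Qm_succ q (m - k - 1), Qm_succ q k,
    show m + 1 = ((m - k - 1) + 1) + (k + 1) by omega, pow_add]
  have hm := Qm_ne_zero hq m
  have hk' := Qm_ne_zero hq k
  have hd := Qm_ne_zero hq (m - k - 1)
  have f1 := one_sub_pow_ne_zero hq k
  have f2 := one_sub_pow_ne_zero hq (m - k - 1)
  simp only [Nat.add_sub_cancel]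
  field_simp
  ring


/-- Finite q-binomial theorem. -/
lemma qbinom (q : ℂ) (hq : ‖q‖ < 1) (y : ℂ) (N : ℕ) :
    ∏ k ∈ range N, (1 + y * q ^ k)
      = ∑ j ∈ range (N + 1), q ^ (j * (j - 1) / 2) * gb q N j * y ^ j := by
  induction N with
  | zero => simp [gb_self q hq 0]
  | succ N ih =>
    have hterm : ∀ i ∈ range N,
        q ^ ((i+1)*(i+1-1)/2) * gb q (N+1) (i+1) * y ^ (i+1)
          = q ^ ((i+1)*(i+1-1)/2) * gb q N (i+1) * y ^ (i+1)
            + q ^ (i*(i-1)/2) * gb q N i * y ^ i * (y * q ^ N) := by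
      intro i hi
      have hiN : i < N := Finset.mem_range.mp hi
      have he : (i+1)*(i+1-1)/2 + (N - i) = i*(i-1)/2 + N := by
        simp only [Nat.add_sub_cancel]
        have := tri_succ i
        omega
      have hq1 : q ^ ((i+1)*(i+1-1)/2) * q ^ (N-i) = q ^ (i*(i-1)/2) * q ^ N := by
        rw [← pow_add, ← pow_add, he]
      rw [gb_pascal q hq hiN, pow_succ y]
      linear_combination (gb q N i * y ^ i * y) * hq1
    have hbd : q ^ ((N+1)*(N+1-1)/2) * gb q (N+1) (N+1) * y ^ (N+1)
        = q ^ (N*(N-1)/2) * gb q N N * y ^ N * (y * q ^ N) := by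
      rw [gb_self q hq (N+1), gb_self q hq N]
      have he : (N+1)*(N+1-1)/2 = N*(N-1)/2 + N := by
        simpa only [Nat.add_sub_cancel] using tri_succ N
      rw [he, pow_add, pow_succ y]
      ring
    rw [Finset.prod_range_succ, ih, mul_add, mul_one, Finset.sum_mul,
      Finset.sum_range_succ' (fun j => q ^ (j*(j-1)/2) * gb q (N+1) j * y ^ j) (N+1),
      Finset.sum_range_succ' (fun j => q ^ (j*(j-1)/2) * gb q N j * y ^ j) N,
      Finset.sum_range_succ (fun j => q ^ (j*(j-1)/2) * gb q N j * y ^ j * (y * q ^ N)) N,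
      Finset.sum_range_succ (fun i => q ^ ((i+1)*(i+1-1)/2) * gb q (N+1) (i+1) * y ^ (i+1)) N,
      Finset.sum_congr rfl hterm, Finset.sum_add_distrib, hbd,
      gb_zero q hq N, gb_zero q hq (N+1)]
    ring

lemma tri_add (N : ℕ) : N*(N-1)/2 + N*(N+1)/2 = N*N := by
  cases N with
  | zero => simp
  | succ k =>
    simp only [Nat.add_sub_cancel]
    obtain ⟨c, hc⟩ : Even ((k+1)*k) := by simpa [mul_comm] using Nat.even_mul_succ_self k
    have e1 : (k+1)*(k+2) = (k+1)*k + 2*(k+1) := by ring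
    have e2 : (k+1)*(k+1) = (k+1)*k + (k+1) := by ring
    rw [e1, e2, hc]
    omega

lemma key_cast (N j : ℕ) :
    ((N*(N+1)/2 + j*(j-1)/2 : ℕ) : ℤ) - ((N*j : ℕ) : ℤ)
      = ((j:ℤ) - N) * ((j:ℤ) - N - 1) / 2 := by
  obtain ⟨a, ha⟩ : Even ((N:ℤ)*(N+1)) := Int.even_mul_succ_self N
  cases j with
  | zero =>
    have hrel : ((0:ℤ) - N) * ((0:ℤ) - N - 1) = (N:ℤ)*(N+1) := by ring
    push_cast [Int.natCast_ediv]
    rw [hrel, ha]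
    omega
  | succ k =>
    obtain ⟨b, hb⟩ : Even (((k:ℤ)+1) * k) := by
      simpa [mul_comm] using Int.even_mul_succ_self (k:ℤ)
    have hrel : (((k:ℤ)+1) - N) * (((k:ℤ)+1) - N - 1)
        = ((k:ℤ)+1) * k - 2*((N:ℤ)*(k+1)) + (N:ℤ)*(N+1) := by ring
    push_cast [Int.natCast_ediv]
    rw [hrel, ha, hb]
    omega

lemma finite_jacobi (q w : ℂ) (hq : ‖q‖ < 1) (hq0 : q ≠ 0) (hw : w ≠ 0) (N : ℕ) :
    (∏ i ∈ range N, (1 + w * q ^ i)) * (∏ i ∈ range N, (1 + q ^ (i+1) / w))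
      = ∑ j ∈ range (2*N + 1), gb q (2*N) j
          * (q ^ (((j:ℤ) - N) * ((j:ℤ) - N - 1) / 2) * w ^ ((j:ℤ) - N)) := by
  have hqN : (q ^ N : ℂ) ≠ 0 := pow_ne_zero N hq0
  have base := qbinom q hq (w / q ^ N) (2*N)
  have hsplit : ∏ k ∈ range (2*N), (1 + w / q ^ N * q ^ k)
      = (∏ i ∈ range N, (1 + w / q ^ N * q ^ i)) * (∏ i ∈ range N, (1 + w * q ^ i)) := by
    rw [two_mul, Finset.prod_range_add]
    congr 1
    refine Finset.prod_congr rfl fun i _ => ?_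
    have : w / q ^ N * q ^ (N + i) = w * q ^ i := by
      rw [pow_add]; field_simp
    rw [this]
  have h1 : ∏ i ∈ range N, (1 + w / q ^ N * q ^ i)
      = (w ^ N / q ^ (N*(N+1)/2)) * ∏ i ∈ range N, (1 + q ^ (i+1) / w) := by
    have hfac : ∀ i ∈ range N, (1 + w / q ^ N * q ^ i)
        = (w * q ^ i / q ^ N) * (1 + q ^ (N-i) / w) := by
      intro i hi
      have hiN : i < N := Finset.mem_range.mp hi
      have hpow : q ^ i * q ^ (N-i) = q ^ N := by rw [← pow_add]; congr 1; omega
      field_simp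
      linear_combination (-1 : ℂ) * hpow
    rw [Finset.prod_congr rfl hfac, Finset.prod_mul_distrib]
    congr 1
    · rw [Finset.prod_div_distrib, Finset.prod_mul_distrib, Finset.prod_const,
        Finset.prod_const, Finset.card_range, Finset.prod_pow_eq_pow_sum,
        Finset.sum_range_id, ← pow_mul]
      have hee : q ^ (N*(N-1)/2) * q ^ (N*(N+1)/2) = q ^ (N*N) := by
        rw [← pow_add, tri_add N]
      have h2 : (q ^ (N*N) : ℂ) ≠ 0 := pow_ne_zero _ hq0
      have h3 : (q ^ (N*(N+1)/2) : ℂ) ≠ 0 := pow_ne_zero _ hq0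
      field_simp
      linear_combination hee
    · refine (Finset.prod_congr rfl fun i hi => ?_).trans
        (Finset.prod_range_reflect (fun i => 1 + q ^ (i+1) / w) N)
      have hiN : i < N := Finset.mem_range.mp hi
      have : N - 1 - i + 1 = N - i := by omega
      rw [this]
  rw [hsplit, h1] at base
  -- base : (w^N / q^T) * P1 * P2 = ∑ ...
  have hT : (q ^ (N*(N+1)/2) : ℂ) ≠ 0 := pow_ne_zero _ hq0
  have hwN : (w ^ N : ℂ) ≠ 0 := pow_ne_zero N hw
  have hterm : ∀ j ∈ range (2*N+1),
      (q ^ (N*(N+1)/2) / w ^ N) * (q ^ (j*(j-1)/2) * gb q (2*N) j * (w / q ^ N) ^ j)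
        = gb q (2*N) j * (q ^ (((j:ℤ) - N) * ((j:ℤ) - N - 1) / 2) * w ^ ((j:ℤ) - N)) := by
    intro j _
    have e1 : w ^ ((j:ℤ) - N) = w ^ j / w ^ N := by
      rw [zpow_sub₀ hw, zpow_natCast, zpow_natCast]
    have e2 : q ^ (((j:ℤ) - N) * ((j:ℤ) - N - 1) / 2)
        = q ^ (N*(N+1)/2 + j*(j-1)/2) / q ^ (N*j) := by
      rw [← key_cast N j, zpow_sub₀ hq0, zpow_natCast, zpow_natCast]
    rw [e1, e2, pow_add, div_pow, ← pow_mul]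
    have h4 : (q ^ (N*j) : ℂ) ≠ 0 := pow_ne_zero _ hq0
    field_simp
  calc (∏ i ∈ range N, (1 + w * q ^ i)) * (∏ i ∈ range N, (1 + q ^ (i+1) / w))
      = (q ^ (N*(N+1)/2) / w ^ N) * ((w ^ N / q ^ (N*(N+1)/2)) *
          (∏ i ∈ range N, (1 + q ^ (i+1) / w)) * (∏ i ∈ range N, (1 + w * q ^ i))) := by
        field_simp
    _ = (q ^ (N*(N+1)/2) / w ^ N) *
          ∑ j ∈ range (2*N+1), q ^ (j*(j-1)/2) * gb q (2*N) j * (w / q ^ N) ^ j := by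
        rw [← base]
    _ = ∑ j ∈ range (2*N+1), (q ^ (N*(N+1)/2) / w ^ N) *
          (q ^ (j*(j-1)/2) * gb q (2*N) j * (w / q ^ N) ^ j) := Finset.mul_sum _ _ _
    _ = _ := Finset.sum_congr rfl hterm




lemma tendsto_prod_poch (a q : ℂ) (hq : ‖q‖ < 1) :
    Tendsto (fun N => ∏ j ∈ range N, (1 - a * q ^ j)) atTop (𝓝 (pochInf a q)) :=
  (multipliable_poch a q hq).hasProd.tendsto_prod_nat

lemma tendsto_Qm {q : ℂ} (hq : ‖q‖ < 1) :
    Tendsto (Qm q) atTop (𝓝 (pochInf q q)) := by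
  refine (tendsto_prod_poch q q hq).congr fun m => ?_
  exact Finset.prod_congr rfl fun j _ => by rw [pow_succ']

lemma Qm_upper_bound {q : ℂ} (hq : ‖q‖ < 1) (m : ℕ) :
    ‖Qm q m‖ ≤ Real.exp ((1 - ‖q‖)⁻¹) := by
  set t := ‖q‖ with ht
  have ht0 : 0 ≤ t := norm_nonneg q
  rw [Qm, norm_prod]
  calc ∏ j ∈ range m, ‖1 - q ^ (j+1)‖
      ≤ ∏ j ∈ range m, (1 + t ^ (j+1)) := by
        refine Finset.prod_le_prod (fun j _ => norm_nonneg _) (fun j _ => ?_)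
        calc ‖1 - q ^ (j+1)‖ ≤ ‖(1:ℂ)‖ + ‖q ^ (j+1)‖ := by
              simpa using norm_sub_le (1:ℂ) (q ^ (j+1))
          _ = 1 + t ^ (j+1) := by simp [norm_pow, ht]
    _ ≤ ∏ j ∈ range m, Real.exp (t ^ (j+1)) := by
        refine Finset.prod_le_prod (fun j _ => by positivity) (fun j _ => ?_)
        linarith [Real.add_one_le_exp (t ^ (j+1))]
    _ = Real.exp (∑ j ∈ range m, t ^ (j+1)) := by rw [Real.exp_sum]
    _ ≤ Real.exp ((1 - t)⁻¹) := by
        apply Real.exp_le_exp.mpr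
        calc ∑ j ∈ range m, t ^ (j+1) ≤ ∑ j ∈ range m, t ^ j :=
              Finset.sum_le_sum fun j _ =>
                pow_le_pow_of_le_one ht0 hq.le (by omega)
          _ ≤ ∑' j : ℕ, t ^ j := Summable.sum_le_tsum _ (fun j _ => pow_nonneg ht0 j)
              (summable_geometric_of_lt_one ht0 hq)
          _ = (1 - t)⁻¹ := tsum_geometric_of_lt_one ht0 hq

lemma tri_int (n : ℤ) : (n + 1) * n / 2 = n * (n - 1) / 2 + n := by
  obtain ⟨c, hc⟩ : Even (n * (n - 1)) := by
    simpa [mul_comm] using Int.even_mul_succ_self (n - 1)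
  have h : (n + 1) * n = n * (n - 1) + 2 * n := by ring
  rw [h, hc]
  omega

lemma summable_tr {t r : ℝ} (ht0 : 0 < t) (ht1 : t < 1) (hr : 0 < r) :
    Summable (fun n : ℤ => t ^ (n * (n - 1) / 2) * r ^ n) := by
  have hval : ∀ m : ℤ, ‖t ^ (m * (m - 1) / 2) * r ^ m‖ = t ^ (m * (m - 1) / 2) * r ^ m :=
    fun m => by
      rw [Real.norm_eq_abs, abs_of_pos]
      positivity
  apply Summable.of_nat_of_neg
  · apply summable_of_ratio_norm_eventually_le (r := 1/2) (by norm_num)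
    have h0 : Tendsto (fun n : ℕ => t ^ n * r) atTop (𝓝 0) := by
      simpa using (tendsto_pow_atTop_nhds_zero_of_lt_one ht0.le ht1).mul_const r
    filter_upwards [h0.eventually_le_const (by norm_num : (0:ℝ) < 1/2)] with n hn
    have hpos : (0:ℝ) < t ^ ((n:ℤ) * ((n:ℤ) - 1) / 2) * r ^ (n:ℤ) := by positivity
    have key : t ^ ((((n+1):ℕ):ℤ) * ((((n+1):ℕ):ℤ) - 1) / 2) * r ^ (((n+1):ℕ):ℤ)
        = (t ^ ((n:ℤ) * ((n:ℤ) - 1) / 2) * r ^ (n:ℤ)) * (t ^ n * r) := by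
      push_cast
      rw [show ((n:ℤ)+1) * (((n:ℤ)+1) - 1) / 2 = (n:ℤ) * ((n:ℤ) - 1) / 2 + n by
        simpa using tri_int (n:ℤ), zpow_add₀ ht0.ne', zpow_add_one₀ hr.ne', zpow_natCast]
      ring
    rw [hval, hval, key]
    nlinarith [hn, hpos.le, pow_nonneg ht0.le n, hr.le]
  · apply summable_of_ratio_norm_eventually_le (r := 1/2) (by norm_num)
    have h0 : Tendsto (fun n : ℕ => t ^ (n+1) / r) atTop (𝓝 0) := by
      have := (tendsto_pow_atTop_nhds_zero_of_lt_one ht0.le ht1).div_const r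
      simpa [Function.comp_def] using this.comp (tendsto_add_atTop_nat 1)
    filter_upwards [h0.eventually_le_const (by norm_num : (0:ℝ) < 1/2)] with n hn
    have hpos : (0:ℝ) < t ^ ((-(n:ℤ)) * ((-(n:ℤ)) - 1) / 2) * r ^ (-(n:ℤ)) := by positivity
    have key : t ^ ((-(((n+1):ℕ):ℤ)) * ((-(((n+1):ℕ):ℤ)) - 1) / 2) * r ^ (-(((n+1):ℕ):ℤ))
        = (t ^ ((-(n:ℤ)) * ((-(n:ℤ)) - 1) / 2) * r ^ (-(n:ℤ))) * (t ^ (n+1) / r) := by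
      push_cast
      rw [show -((n:ℤ)+1) = -(n:ℤ)-1 by ring]
      have he : (-(n:ℤ)-1) * ((-(n:ℤ)-1) - 1) / 2
          = (-(n:ℤ)) * ((-(n:ℤ)) - 1) / 2 + (n+1) := by
        have h1 := tri_int (-(n:ℤ)-1)
        have h3 : (-(n:ℤ)-1+1)*(-(n:ℤ)-1) = -(n:ℤ)*(-(n:ℤ)-1) := by ring
        omega
      rw [he, zpow_add₀ ht0.ne']
      rw [show -(n:ℤ)-1 = -(n:ℤ) + (-1) by ring, zpow_add₀ hr.ne']
      rw [show ((n:ℤ)+1) = ((n+1 : ℕ) : ℤ) by push_cast; ring, zpow_natCast, zpow_neg_one]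
      field_simp
    rw [hval, hval, key]
    nlinarith [hn, hpos.le, pow_nonneg ht0.le (n+1), hr.le]




/-- Jacobi triple product: `∑_{n∈ℤ} p^{n(n-1)/2} (-x)^n = (p;p)_∞ θ_p(x)`. -/
theorem jacobi_triple_product (p x : ℂ) (hp : ‖p‖ < 1) (hx : x ≠ 0) :
    HasSum (fun n : ℤ => p ^ (n * (n - 1) / 2) * (-x) ^ n)
      (pochInf p p * theta p x) := by
  by_cases hp0 : p = 0
  · subst hp0
    have h1 : pochInf 0 0 = 1 := by simp [pochInf]
    have h2 : pochInf (0/x) 0 = 1 := by simp [pochInf]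
    have h3 : pochInf x 0 = 1 - x := by
      rw [pochInf]
      rw [tprod_eq_prod (s := ({0} : Finset ℕ))
        (fun j hj => by
          have : j ≠ 0 := by simpa using hj
          simp [zero_pow this])]
      simp
    have hval : pochInf 0 0 * theta 0 x = 1 + -x := by
      rw [theta, h1, h2, h3]; ring
    rw [hval]
    have hfun : (fun n : ℤ => (0:ℂ) ^ (n * (n - 1) / 2) * (-x) ^ n)
        = fun n : ℤ => (if n = (0:ℤ) then (1:ℂ) else 0) + (if n = (1:ℤ) then -x else 0) := by
      funext n
      by_cases h0 : n = 0
      · subst h0; norm_num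
      by_cases h1' : n = 1
      · subst h1'; norm_num
      · have h2' : (2:ℤ) ≤ n * (n - 1) := by
          rcases lt_or_ge n 0 with h | h
          · nlinarith
          · have : (2:ℤ) ≤ n := by omega
            nlinarith
        have : n * (n - 1) / 2 ≠ 0 := by omega
        rw [zero_zpow _ this]
        simp [h0, h1']
    rw [hfun]
    exact (hasSum_ite_eq (0:ℤ) (1:ℂ)).add (hasSum_ite_eq (1:ℤ) (-x))
  · -- main case
    set t := ‖p‖ with htdef
    set r := ‖x‖ with hrdef
    have ht0 : 0 < t := by simpa [htdef] using norm_pos_iff.mpr hp0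
    have hr : 0 < r := by simpa [hrdef] using norm_pos_iff.mpr hx
    have hw : (-x) ≠ 0 := neg_ne_zero.mpr hx
    obtain ⟨c, hc0, hcQ⟩ := Qm_lower_bound hp
    set C := Real.exp ((1 - t)⁻¹) with hCdef
    have hCpos : 0 < C := Real.exp_pos _
    set M := C / (c*c) with hMdef
    have hM0 : 0 ≤ M := by positivity
    set Qi := pochInf p p with hQidef
    have hQlim : Tendsto (Qm p) atTop (𝓝 Qi) := tendsto_Qm hp
    have hQabs : c ≤ ‖Qi‖ := by
      have habs : Tendsto (fun m => ‖Qm p m‖) atTop (𝓝 (‖Qi‖)) :=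
        (continuous_norm.tendsto Qi).comp hQlim
      exact ge_of_tendsto' habs hcQ
    have hQ0 : Qi ≠ 0 := by
      intro h
      rw [h] at hQabs
      simp at hQabs
      linarith
    set g : ℤ → ℂ := fun n => p ^ (n * (n - 1) / 2) * (-x) ^ n with hgdef
    set F : ℕ → ℤ → ℂ := fun N n =>
      if n.natAbs ≤ N then gb p (2*N) ((n + N).toNat) * (p ^ (n * (n - 1) / 2) * (-x) ^ n)
      else 0 with hFdef
    -- step 1 : tsum of F N
    have hFsum : ∀ N : ℕ, ∑' n : ℤ, F N n
        = (∏ i ∈ range N, (1 + (-x) * p ^ i)) * (∏ i ∈ range N, (1 + p ^ (i+1) / (-x))) := by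
      intro N
      have hout : ∀ n : ℤ, n ∉ Finset.Icc (-(N:ℤ)) N → F N n = 0 := by
        intro n hn
        rw [Finset.mem_Icc] at hn
        rw [hFdef]
        simp only
        rw [if_neg (by omega)]
      rw [tsum_eq_sum hout, finite_jacobi p (-x) hp hp0 hw N]
      refine Finset.sum_nbij' (i := fun n => (n + N).toNat) (j := fun k => (k:ℤ) - N)
        ?_ ?_ ?_ ?_ ?_
      · intro n hn; rw [Finset.mem_Icc] at hn; rw [Finset.mem_range]; omega
      · intro k hk; rw [Finset.mem_range] at hk; rw [Finset.mem_Icc]; omega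
      · intro n hn; rw [Finset.mem_Icc] at hn; omega
      · intro k hk; rw [Finset.mem_range] at hk; omega
      · intro n hn
        rw [Finset.mem_Icc] at hn
        have he : (((n + N).toNat : ℤ)) - N = n := by omega
        rw [hFdef]
        simp only
        rw [if_pos (by omega), he]
    -- step 2 : limit of the products
    have hFlim : Tendsto (fun N => ∑' n : ℤ, F N n) atTop (𝓝 (theta p x)) := by
      have hP1 : Tendsto (fun N => ∏ i ∈ range N, (1 + (-x) * p ^ i)) atTop
          (𝓝 (pochInf x p)) := by
        refine (tendsto_prod_poch x p hp).congr fun N => ?_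
        exact Finset.prod_congr rfl fun i _ => by ring
      have hP2 : Tendsto (fun N => ∏ i ∈ range N, (1 + p ^ (i+1) / (-x))) atTop
          (𝓝 (pochInf (p/x) p)) := by
        refine (tendsto_prod_poch (p/x) p hp).congr fun N => ?_
        refine Finset.prod_congr rfl fun i _ => ?_
        rw [pow_succ']
        field_simp
        ring
      have := hP1.mul hP2
      rw [← theta] at this
      exact this.congr fun N => (hFsum N).symm
    -- step 3 : domination
    have hFb : ∀ᶠ N in atTop, ∀ n : ℤ, ‖F N n‖ ≤ M * (t ^ (n * (n - 1) / 2) * r ^ n) := by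
      refine Eventually.of_forall fun N n => ?_
      rw [hFdef]
      simp only
      by_cases hcase : n.natAbs ≤ N
      · rw [if_pos hcase]
        have hnorm : ‖p ^ (n * (n - 1) / 2) * (-x) ^ n‖ = t ^ (n * (n - 1) / 2) * r ^ n := by
          rw [norm_mul, norm_zpow, norm_zpow, norm_neg]
        have hgb : ‖gb p (2*N) ((n + N).toNat)‖ ≤ M := by
          rw [gb, norm_div, norm_mul, hMdef]
          apply div_le_div₀ hCpos.le (Qm_upper_bound hp _) (by positivity)
          exact mul_le_mul (hcQ _) (hcQ _) hc0.le (norm_nonneg _)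
        rw [norm_mul, hnorm]
        have hpos : (0:ℝ) ≤ t ^ (n * (n - 1) / 2) * r ^ n := by positivity
        exact mul_le_mul_of_nonneg_right hgb hpos
      · rw [if_neg hcase, norm_zero]
        positivity
    -- step 4 : pointwise limits
    have hpt : ∀ n : ℤ, Tendsto (fun N => F N n) atTop (𝓝 ((Qi / (Qi * Qi)) * g n)) := by
      intro n
      have h2N : Tendsto (fun N : ℕ => 2*N) atTop atTop :=
        tendsto_atTop.mpr fun b => eventually_atTop.2 ⟨b, fun N hN => by omega⟩
      have hA : Tendsto (fun N => Qm p (2*N)) atTop (𝓝 Qi) := hQlim.comp h2N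
      have hkB : Tendsto (fun N : ℕ => (n + N).toNat) atTop atTop :=
        tendsto_atTop.mpr fun b => eventually_atTop.2 ⟨b + n.natAbs, fun N hN => by omega⟩
      have hB : Tendsto (fun N : ℕ => Qm p ((n + N).toNat)) atTop (𝓝 Qi) := hQlim.comp hkB
      have hkC : Tendsto (fun N : ℕ => 2*N - (n + N).toNat) atTop atTop :=
        tendsto_atTop.mpr fun b => eventually_atTop.2 ⟨b + n.natAbs, fun N hN => by omega⟩
      have hC2 : Tendsto (fun N : ℕ => Qm p (2*N - (n + N).toNat)) atTop (𝓝 Qi) :=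
        hQlim.comp hkC
      have hgb : Tendsto (fun N => gb p (2*N) ((n + N).toNat)) atTop (𝓝 (Qi / (Qi * Qi))) := by
        simp only [gb]
        exact hA.div (hB.mul hC2) (mul_ne_zero hQ0 hQ0)
      have hmul := hgb.mul_const (g n)
      refine Tendsto.congr' ?_ hmul
      filter_upwards [eventually_ge_atTop n.natAbs] with N hN
      rw [hFdef]
      simp only
      rw [if_pos hN, hgdef]
    -- step 5 : Tannery
    have hbound_sum : Summable (fun n : ℤ => M * (t ^ (n * (n - 1) / 2) * r ^ n)) :=
      (summable_tr ht0 hp hr).mul_left M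
    have hT := tendsto_tsum_of_dominated_convergence hbound_sum hpt hFb
    have huniq : ∑' n : ℤ, (Qi / (Qi * Qi)) * g n = theta p x :=
      tendsto_nhds_unique hT hFlim
    rw [div_self_mul_self', tsum_mul_left, inv_mul_eq_iff_eq_mul₀ hQ0] at huniq
    have hsg : Summable g := by
      apply Summable.of_norm
      refine (summable_tr ht0 hp hr).congr fun n => ?_
      rw [hgdef]
      simp only
      rw [norm_mul, norm_zpow, norm_zpow, norm_neg]
    have hfinal := hsg.hasSum
    rw [huniq] at hfinal
    exact hfinal
end

section
/- (Duplication formula) For |p|<1, |q|<1 and suitable z ∈ ℂ*, Γ_{p,q}(z²) = Γ_{p,q}(z)Γ_{p,q}(-z)Γ_{p,q}(q^{1/2}z)Γ_{p,q}(-q^{1/2}z)Γ_{p,q}(p^{1/2}z)Γ_{p,q}(-p^{1/2}z)Γ_{p,q}((pq)^{1/2}z)Γ_{p,q}(-(pq)^{1/2}z), where q^{1/2}, p^{1/2} are fixed square roots. -/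
open scoped BigOperators

/-- The elliptic gamma function
`Γ_{p,q}(z) = ∏_{j,k≥0} (1 - z⁻¹ p^{j+1} q^{k+1})/(1 - z p^j q^k)`. -/
noncomputable def ellGamma (p q z : ℂ) : ℂ :=
  ∏' jk : ℕ × ℕ,
    (1 - z⁻¹ * p ^ (jk.1 + 1) * q ^ (jk.2 + 1)) / (1 - z * p ^ jk.1 * q ^ jk.2)


open Filter

noncomputable def egTerm (p q w : ℂ) (jk : ℕ × ℕ) : ℂ :=
  (1 - w⁻¹ * p ^ (jk.1 + 1) * q ^ (jk.2 + 1)) / (1 - w * p ^ jk.1 * q ^ jk.2)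

lemma hasProd_zero_of_eq_zero {ι : Type*} {f : ι → ℂ} (i₀ : ι) (h : f i₀ = 0) :
    HasProd f 0 := by
  have he : ∀ᶠ s in (atTop : Filter (Finset ι)), ∏ i ∈ s, f i = 0 :=
    eventually_atTop.2 ⟨{i₀}, fun s hs =>
      Finset.prod_eq_zero (hs (Finset.mem_singleton_self i₀)) h⟩
  exact (tendsto_const_nhds.congr' (he.mono fun s hs => hs.symm))

lemma tprod_eq_zero_of {ι : Type*} (f : ι → ℂ) (i₀ : ι) (h : f i₀ = 0) :
    ∏' i, f i = 0 := (hasProd_zero_of_eq_zero i₀ h).tprod_eq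

lemma key_num (z sp sq U : ℂ) :
    (1 - z⁻¹*U) * (1 - (-z)⁻¹*U) * (1 - (sq*z)⁻¹*U) * (1 - (-(sq*z))⁻¹*U)
      * (1 - (sp*z)⁻¹*U) * (1 - (-(sp*z))⁻¹*U) * (1 - (sp*sq*z)⁻¹*U) * (1 - (-(sp*sq*z))⁻¹*U)
    = (1 - (z^2)⁻¹*(sp⁻¹^2*sq⁻¹^2*U^2)) * (1 - (z^2)⁻¹*(sq⁻¹^2*U^2))
      * (1 - (z^2)⁻¹*(sp⁻¹^2*U^2)) * (1 - (z^2)⁻¹*U^2) := by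
  simp only [mul_inv, inv_neg, inv_pow]
  ring

lemma inv_sq_mul_pow (a : ℂ) (n : ℕ) : a⁻¹^2 * ((a^2)^(n+1))^2 = (a^2)^(n*2+1) := by
  rcases eq_or_ne a 0 with rfl | h
  · simp
  · have h2 : ((a^2)^(n+1))^2 = a^2 * (a^2)^(n*2+1) := by
      rw [← pow_mul, ← pow_succ']
      congr 1
      omega
    rw [h2, ← mul_assoc, show a⁻¹^2 * a^2 = 1 by
      rw [← mul_pow, inv_mul_cancel₀ h, one_pow], one_mul]

lemma sq_pow (a : ℂ) (n : ℕ) : ((a^2)^(n+1))^2 = (a^2)^(n*2+1+1) := by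
  rw [← pow_mul]
  congr 1
  omega

lemma sq_pow' (a : ℂ) (n : ℕ) : ((a^2)^n)^2 = (a^2)^(n*2) := by
  rw [← pow_mul, mul_comm]

/-- Numerator identity. -/
lemma keyN (sp sq z : ℂ) (j k : ℕ) :
    (1 - z⁻¹ * (sp^2)^(j+1) * (sq^2)^(k+1)) * (1 - (-z)⁻¹ * (sp^2)^(j+1) * (sq^2)^(k+1))
      * (1 - (sq*z)⁻¹ * (sp^2)^(j+1) * (sq^2)^(k+1)) * (1 - (-(sq*z))⁻¹ * (sp^2)^(j+1) * (sq^2)^(k+1))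
      * (1 - (sp*z)⁻¹ * (sp^2)^(j+1) * (sq^2)^(k+1)) * (1 - (-(sp*z))⁻¹ * (sp^2)^(j+1) * (sq^2)^(k+1))
      * (1 - (sp*sq*z)⁻¹ * (sp^2)^(j+1) * (sq^2)^(k+1)) * (1 - (-(sp*sq*z))⁻¹ * (sp^2)^(j+1) * (sq^2)^(k+1))
    = (1 - (z^2)⁻¹ * (sp^2)^(j*2+1) * (sq^2)^(k*2+1)) * (1 - (z^2)⁻¹ * (sp^2)^(j*2+1+1) * (sq^2)^(k*2+1))
      * (1 - (z^2)⁻¹ * (sp^2)^(j*2+1) * (sq^2)^(k*2+1+1)) * (1 - (z^2)⁻¹ * (sp^2)^(j*2+1+1) * (sq^2)^(k*2+1+1)) := by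
  have e1 : (z^2)⁻¹ * (sp^2)^(j*2+1) * (sq^2)^(k*2+1)
      = (z^2)⁻¹*(sp⁻¹^2*sq⁻¹^2*((sp^2)^(j+1) * (sq^2)^(k+1))^2) := by
    rw [mul_pow, show sp⁻¹^2*sq⁻¹^2*(((sp^2)^(j+1))^2 * ((sq^2)^(k+1))^2)
        = (sp⁻¹^2*((sp^2)^(j+1))^2) * (sq⁻¹^2*((sq^2)^(k+1))^2) from by ring,
      inv_sq_mul_pow, inv_sq_mul_pow, mul_assoc]
  have e2 : (z^2)⁻¹ * (sp^2)^(j*2+1+1) * (sq^2)^(k*2+1)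
      = (z^2)⁻¹*(sq⁻¹^2*((sp^2)^(j+1) * (sq^2)^(k+1))^2) := by
    rw [mul_pow, show sq⁻¹^2*(((sp^2)^(j+1))^2 * ((sq^2)^(k+1))^2)
        = ((sp^2)^(j+1))^2 * (sq⁻¹^2*((sq^2)^(k+1))^2) from by ring,
      inv_sq_mul_pow, sq_pow, mul_assoc]
  have e3 : (z^2)⁻¹ * (sp^2)^(j*2+1) * (sq^2)^(k*2+1+1)
      = (z^2)⁻¹*(sp⁻¹^2*((sp^2)^(j+1) * (sq^2)^(k+1))^2) := by
    rw [mul_pow, show sp⁻¹^2*(((sp^2)^(j+1))^2 * ((sq^2)^(k+1))^2)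
        = (sp⁻¹^2*((sp^2)^(j+1))^2) * ((sq^2)^(k+1))^2 from by ring,
      inv_sq_mul_pow, sq_pow, mul_assoc]
  have e4 : (z^2)⁻¹ * (sp^2)^(j*2+1+1) * (sq^2)^(k*2+1+1)
      = (z^2)⁻¹*(((sp^2)^(j+1) * (sq^2)^(k+1))^2) := by
    rw [mul_pow, sq_pow, sq_pow, mul_assoc]
  rw [e1, e2, e3, e4,
    mul_assoc z⁻¹, mul_assoc (-z)⁻¹, mul_assoc (sq*z)⁻¹, mul_assoc (-(sq*z))⁻¹,
    mul_assoc (sp*z)⁻¹, mul_assoc (-(sp*z))⁻¹, mul_assoc (sp*sq*z)⁻¹, mul_assoc (-(sp*sq*z))⁻¹]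
  exact key_num z sp sq _

/-- Denominator identity. -/
lemma keyD (sp sq z : ℂ) (j k : ℕ) :
    (1 - z * (sp^2)^j * (sq^2)^k) * (1 - (-z) * (sp^2)^j * (sq^2)^k)
      * (1 - (sq*z) * (sp^2)^j * (sq^2)^k) * (1 - (-(sq*z)) * (sp^2)^j * (sq^2)^k)
      * (1 - (sp*z) * (sp^2)^j * (sq^2)^k) * (1 - (-(sp*z)) * (sp^2)^j * (sq^2)^k)
      * (1 - (sp*sq*z) * (sp^2)^j * (sq^2)^k) * (1 - (-(sp*sq*z)) * (sp^2)^j * (sq^2)^k)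
    = (1 - z^2 * (sp^2)^(j*2) * (sq^2)^(k*2)) * (1 - z^2 * (sp^2)^(j*2+1) * (sq^2)^(k*2))
      * (1 - z^2 * (sp^2)^(j*2) * (sq^2)^(k*2+1)) * (1 - z^2 * (sp^2)^(j*2+1) * (sq^2)^(k*2+1)) := by
  have f1 : (sp^2)^(j*2) = ((sp^2)^j)^2 := (sq_pow' sp j).symm
  have f2 : (sq^2)^(k*2) = ((sq^2)^k)^2 := (sq_pow' sq k).symm
  rw [pow_succ (sp^2) (j*2), pow_succ (sq^2) (k*2), f1, f2]
  ring

/-- Full per-point identity. -/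
lemma keyT (sp sq z : ℂ) (j k : ℕ) :
    egTerm (sp^2) (sq^2) z (j,k) * egTerm (sp^2) (sq^2) (-z) (j,k)
      * egTerm (sp^2) (sq^2) (sq*z) (j,k) * egTerm (sp^2) (sq^2) (-(sq*z)) (j,k)
      * egTerm (sp^2) (sq^2) (sp*z) (j,k) * egTerm (sp^2) (sq^2) (-(sp*z)) (j,k)
      * egTerm (sp^2) (sq^2) (sp*sq*z) (j,k) * egTerm (sp^2) (sq^2) (-(sp*sq*z)) (j,k)
    = egTerm (sp^2) (sq^2) (z^2) (j*2, k*2) * egTerm (sp^2) (sq^2) (z^2) (j*2+1, k*2)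
      * egTerm (sp^2) (sq^2) (z^2) (j*2, k*2+1) * egTerm (sp^2) (sq^2) (z^2) (j*2+1, k*2+1) := by
  simp only [egTerm, div_mul_div_comm]
  rw [keyN sp sq z j k, keyD sp sq z j k]

lemma multipliable_egTerm (p q w : ℂ) (hp : ‖p‖ < 1) (hq : ‖q‖ < 1)
    (hnum : ∀ jk : ℕ × ℕ, (1 : ℂ) - w⁻¹ * p^(jk.1+1) * q^(jk.2+1) ≠ 0)
    (hden : ∀ jk : ℕ × ℕ, (1 : ℂ) - w * p^jk.1 * q^jk.2 ≠ 0) :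
    Multipliable (egTerm p q w) := by
  apply (fun (f : ℕ × ℕ → Unit → ℂ) (_ : ∀ x n, f n x ≠ 0)
      (hf : ∀ x, Summable fun n => Complex.log (f n x)) (x : Unit) =>
      Complex.multipliable_of_summable_log (hf x)) (fun jk (_ : Unit) => egTerm p q w jk) ?_ ?_ ()
  · intro _ jk
    exact div_ne_zero (hnum jk) (hden jk)
  · intro _
    set r : ℕ × ℕ → ℝ := fun jk => ‖p‖^jk.1 * ‖q‖^jk.2 with hrdef
    have hr : Summable r :=
      (summable_geometric_of_lt_one (norm_nonneg p) hp).mul_of_nonneg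
        (summable_geometric_of_lt_one (norm_nonneg q) hq)
        (fun _ => pow_nonneg (norm_nonneg p) _) (fun _ => pow_nonneg (norm_nonneg q) _)
    set C := ‖w - w⁻¹ * p * q‖ with hCdef
    have hC0 : 0 ≤ C := norm_nonneg _
    apply Summable.of_norm_bounded_eventually (g := fun jk => 3 * C * r jk) (hr.mul_left _)
    have h0 : Tendsto r cofinite (nhds 0) := hr.tendsto_cofinite_zero
    have h1 : ∀ᶠ jk in cofinite, ‖w‖ * r jk < 1/2 := by
      have := h0.const_mul ‖w‖
      rw [mul_zero] at this
      exact this.eventually_lt_const (by norm_num)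
    have h2 : ∀ᶠ jk in cofinite, C * r jk < 1/4 := by
      have := h0.const_mul C
      rw [mul_zero] at this
      exact this.eventually_lt_const (by norm_num)
    filter_upwards [h1, h2] with jk hw hc
    have hrpos : 0 ≤ r jk := mul_nonneg (pow_nonneg (norm_nonneg p) _) (pow_nonneg (norm_nonneg q) _)
    set B : ℂ := p ^ jk.1 * q ^ jk.2 with hBdef
    have hBnorm : ‖B‖ = r jk := by rw [hBdef, norm_mul, norm_pow, norm_pow]
    have hwB : ‖w * B‖ < 1/2 := by rw [norm_mul, hBnorm]; exact hw
    have hden2 : (1:ℝ)/2 ≤ ‖1 - w * B‖ := by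
      have := norm_sub_norm_le (1 : ℂ) (w*B)
      rw [norm_one] at this
      linarith
    have hdne : (1 : ℂ) - w * B ≠ 0 := by
      intro h
      rw [h, norm_zero] at hden2
      linarith
    set x : ℂ := (B * (w - w⁻¹ * p * q)) / (1 - w * B) with hxdef
    have hterm : egTerm p q w jk = 1 + x := by
      rw [egTerm, hxdef, show (1:ℂ) - w * p^jk.1 * q^jk.2 = 1 - w * B by rw [hBdef, mul_assoc]]
      rw [div_eq_iff hdne, add_mul, one_mul, div_mul_cancel₀ _ hdne]
      simp only [hBdef, pow_succ]
      ring
    have hxnorm : ‖x‖ ≤ 2 * (C * r jk) := by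
      rw [hxdef, norm_div, norm_mul, hBnorm, ← hCdef]
      calc r jk * C / ‖1 - w * B‖ ≤ r jk * C / (1/2) := by
            apply div_le_div_of_nonneg_left (mul_nonneg hrpos hC0) (by norm_num) hden2
        _ = 2 * (C * r jk) := by ring
    have hxhalf : ‖x‖ ≤ 1/2 := le_trans hxnorm (by linarith)
    rw [hterm]
    calc ‖Complex.log (1+x)‖ ≤ 3/2 * ‖x‖ := Complex.norm_log_one_add_half_le_self hxhalf
      _ ≤ 3/2 * (2*(C * r jk)) := by
          apply mul_le_mul_of_nonneg_left hxnorm (by norm_num)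
      _ = 3 * C * r jk := by ring

lemma ellGamma_eq (p q w : ℂ) : ellGamma p q w = ∏' jk : ℕ × ℕ, egTerm p q w jk := rfl

def dupEquiv : (ℕ×ℕ) × (Fin 2 × Fin 2) ≃ ℕ×ℕ :=
  (Equiv.prodProdProdComm ℕ ℕ (Fin 2) (Fin 2)).trans
    ((Nat.divModEquiv 2).symm.prodCongr (Nat.divModEquiv 2).symm)

lemma dupEquiv_apply (jk : ℕ×ℕ) (b c : Fin 2) :
    dupEquiv (jk, (b, c)) = (jk.1*2+(b:ℕ), jk.2*2+(c:ℕ)) := rfl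


theorem ellGamma_duplication (p q z sp sq : ℂ)
    (hp : ‖p‖ < 1) (hq : ‖q‖ < 1)
    (hsp : sp ^ 2 = p) (hsq : sq ^ 2 = q) (hz : z ≠ 0)
    (hpole : ∀ j k : ℕ, z ^ 2 * p ^ j * q ^ k ≠ 1)
    (hpole' : ∀ (j k : ℕ) (w : ℂ),
      w ∈ ({z, -z, sq * z, -(sq * z), sp * z, -(sp * z),
            sp * sq * z, -(sp * sq * z)} : Set ℂ) → w * p ^ j * q ^ k ≠ 1) :
    ellGamma p q (z ^ 2)
      = ellGamma p q z * ellGamma p q (-z) * ellGamma p q (sq * z)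
          * ellGamma p q (-(sq * z)) * ellGamma p q (sp * z) * ellGamma p q (-(sp * z))
          * ellGamma p q (sp * sq * z) * ellGamma p q (-(sp * sq * z)) := by
  subst hsp hsq
  have hp' : ‖sp^2‖ < 1 := by exact hp
  have hq' : ‖sq^2‖ < 1 := by exact hq
  -- denominators never vanish
  have hdenz2 : ∀ jk : ℕ × ℕ, (1:ℂ) - z^2 * (sp^2)^jk.1 * (sq^2)^jk.2 ≠ 0 := by
    intro jk h
    exact hpole jk.1 jk.2 (sub_eq_zero.mp h).symm
  have hden8 : ∀ w ∈ ({z, -z, sq * z, -(sq * z), sp * z, -(sp * z),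
            sp * sq * z, -(sp * sq * z)} : Set ℂ),
      ∀ jk : ℕ × ℕ, (1:ℂ) - w * (sp^2)^jk.1 * (sq^2)^jk.2 ≠ 0 := by
    intro w hw jk h
    exact hpole' jk.1 jk.2 w hw (sub_eq_zero.mp h).symm
  by_cases hvan : ∃ jk : ℕ × ℕ, (1:ℂ) - (z^2)⁻¹ * (sp^2)^(jk.1+1) * (sq^2)^(jk.2+1) = 0
  · -- a numerator vanishes: both sides are zero
    obtain ⟨jk0, hJK⟩ := hvan
    have hL : ellGamma (sp^2) (sq^2) (z^2) = 0 := by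
      refine tprod_eq_zero_of _ jk0 ?_
      show (1 - (z^2)⁻¹ * (sp^2)^(jk0.1+1) * (sq^2)^(jk0.2+1))
          / (1 - z^2 * (sp^2)^jk0.1 * (sq^2)^jk0.2) = 0
      rw [hJK, zero_div]
    rw [hL]
    obtain ⟨j, k, hc1, hc2⟩ : ∃ j k : ℕ,
        (jk0.1 = j*2 ∨ jk0.1 = j*2+1) ∧ (jk0.2 = k*2 ∨ jk0.2 = k*2+1) :=
      ⟨jk0.1/2, jk0.2/2, by omega, by omega⟩
    have hfac0 : egTerm (sp^2) (sq^2) (z^2) (jk0.1, jk0.2) = 0 := by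
      show (1 - (z^2)⁻¹ * (sp^2)^(jk0.1+1) * (sq^2)^(jk0.2+1))
          / (1 - z^2 * (sp^2)^jk0.1 * (sq^2)^jk0.2) = 0
      rw [hJK, zero_div]
    have hzero4 : egTerm (sp^2) (sq^2) (z^2) (j*2, k*2) * egTerm (sp^2) (sq^2) (z^2) (j*2+1, k*2)
        * egTerm (sp^2) (sq^2) (z^2) (j*2, k*2+1) * egTerm (sp^2) (sq^2) (z^2) (j*2+1, k*2+1) = 0 := by
      rcases hc1 with h1|h1 <;> rcases hc2 with h2|h2 <;> rw [h1, h2] at hfac0 <;>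
        simp [hfac0]
    have h8zero : egTerm (sp^2) (sq^2) z (j,k) * egTerm (sp^2) (sq^2) (-z) (j,k)
        * egTerm (sp^2) (sq^2) (sq*z) (j,k) * egTerm (sp^2) (sq^2) (-(sq*z)) (j,k)
        * egTerm (sp^2) (sq^2) (sp*z) (j,k) * egTerm (sp^2) (sq^2) (-(sp*z)) (j,k)
        * egTerm (sp^2) (sq^2) (sp*sq*z) (j,k) * egTerm (sp^2) (sq^2) (-(sp*sq*z)) (j,k) = 0 := by
      rw [keyT sp sq z j k]; exact hzero4
    simp only [mul_eq_zero] at h8zero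
    rcases h8zero with (((((((h|h)|h)|h)|h)|h)|h)|h) <;>
      [ rw [show ellGamma (sp^2) (sq^2) z = 0 from tprod_eq_zero_of _ (j,k) h];
        rw [show ellGamma (sp^2) (sq^2) (-z) = 0 from tprod_eq_zero_of _ (j,k) h];
        rw [show ellGamma (sp^2) (sq^2) (sq*z) = 0 from tprod_eq_zero_of _ (j,k) h];
        rw [show ellGamma (sp^2) (sq^2) (-(sq*z)) = 0 from tprod_eq_zero_of _ (j,k) h];
        rw [show ellGamma (sp^2) (sq^2) (sp*z) = 0 from tprod_eq_zero_of _ (j,k) h];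
        rw [show ellGamma (sp^2) (sq^2) (-(sp*z)) = 0 from tprod_eq_zero_of _ (j,k) h];
        rw [show ellGamma (sp^2) (sq^2) (sp*sq*z) = 0 from tprod_eq_zero_of _ (j,k) h];
        rw [show ellGamma (sp^2) (sq^2) (-(sp*sq*z)) = 0 from tprod_eq_zero_of _ (j,k) h]] <;>
      ring
  · -- no numerator vanishes
    push_neg at hvan
    -- all eight numerators are nonzero
    have hnums : ∀ jk : ℕ × ℕ,
        ((1:ℂ) - z⁻¹ * (sp^2)^(jk.1+1) * (sq^2)^(jk.2+1) ≠ 0)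
        ∧ ((1:ℂ) - (-z)⁻¹ * (sp^2)^(jk.1+1) * (sq^2)^(jk.2+1) ≠ 0)
        ∧ ((1:ℂ) - (sq*z)⁻¹ * (sp^2)^(jk.1+1) * (sq^2)^(jk.2+1) ≠ 0)
        ∧ ((1:ℂ) - (-(sq*z))⁻¹ * (sp^2)^(jk.1+1) * (sq^2)^(jk.2+1) ≠ 0)
        ∧ ((1:ℂ) - (sp*z)⁻¹ * (sp^2)^(jk.1+1) * (sq^2)^(jk.2+1) ≠ 0)
        ∧ ((1:ℂ) - (-(sp*z))⁻¹ * (sp^2)^(jk.1+1) * (sq^2)^(jk.2+1) ≠ 0)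
        ∧ ((1:ℂ) - (sp*sq*z)⁻¹ * (sp^2)^(jk.1+1) * (sq^2)^(jk.2+1) ≠ 0)
        ∧ ((1:ℂ) - (-(sp*sq*z))⁻¹ * (sp^2)^(jk.1+1) * (sq^2)^(jk.2+1) ≠ 0) := by
      intro jk
      have hR : (1 - (z^2)⁻¹ * (sp^2)^(jk.1*2+1) * (sq^2)^(jk.2*2+1))
          * (1 - (z^2)⁻¹ * (sp^2)^(jk.1*2+1+1) * (sq^2)^(jk.2*2+1))
          * (1 - (z^2)⁻¹ * (sp^2)^(jk.1*2+1) * (sq^2)^(jk.2*2+1+1))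
          * (1 - (z^2)⁻¹ * (sp^2)^(jk.1*2+1+1) * (sq^2)^(jk.2*2+1+1)) ≠ 0 :=
        mul_ne_zero (mul_ne_zero (mul_ne_zero
          (hvan (jk.1*2, jk.2*2)) (hvan (jk.1*2+1, jk.2*2)))
          (hvan (jk.1*2, jk.2*2+1))) (hvan (jk.1*2+1, jk.2*2+1))
      have hL := (keyN sp sq z jk.1 jk.2) ▸ hR
      simp only [ne_eq, mul_eq_zero, not_or] at hL
      obtain ⟨⟨⟨⟨⟨⟨⟨h1,h2⟩,h3⟩,h4⟩,h5⟩,h6⟩,h7⟩,h8⟩ := hL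
      exact ⟨h1,h2,h3,h4,h5,h6,h7,h8⟩
    -- multipliability
    have M1 : Multipliable (egTerm (sp^2) (sq^2) z) :=
      multipliable_egTerm _ _ _ hp' hq' (fun jk => (hnums jk).1)
        (hden8 z (by simp))
    have M2 : Multipliable (egTerm (sp^2) (sq^2) (-z)) :=
      multipliable_egTerm _ _ _ hp' hq' (fun jk => (hnums jk).2.1)
        (hden8 (-z) (by simp))
    have M3 : Multipliable (egTerm (sp^2) (sq^2) (sq*z)) :=
      multipliable_egTerm _ _ _ hp' hq' (fun jk => (hnums jk).2.2.1)
        (hden8 (sq*z) (by simp))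
    have M4 : Multipliable (egTerm (sp^2) (sq^2) (-(sq*z))) :=
      multipliable_egTerm _ _ _ hp' hq' (fun jk => (hnums jk).2.2.2.1)
        (hden8 (-(sq*z)) (by simp))
    have M5 : Multipliable (egTerm (sp^2) (sq^2) (sp*z)) :=
      multipliable_egTerm _ _ _ hp' hq' (fun jk => (hnums jk).2.2.2.2.1)
        (hden8 (sp*z) (by simp))
    have M6 : Multipliable (egTerm (sp^2) (sq^2) (-(sp*z))) :=
      multipliable_egTerm _ _ _ hp' hq' (fun jk => (hnums jk).2.2.2.2.2.1)
        (hden8 (-(sp*z)) (by simp))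
    have M7 : Multipliable (egTerm (sp^2) (sq^2) (sp*sq*z)) :=
      multipliable_egTerm _ _ _ hp' hq' (fun jk => (hnums jk).2.2.2.2.2.2.1)
        (hden8 (sp*sq*z) (by simp))
    have M8 : Multipliable (egTerm (sp^2) (sq^2) (-(sp*sq*z))) :=
      multipliable_egTerm _ _ _ hp' hq' (fun jk => (hnums jk).2.2.2.2.2.2.2)
        (hden8 (-(sp*sq*z)) (by simp))
    have Mz2 : Multipliable (egTerm (sp^2) (sq^2) (z^2)) :=
      multipliable_egTerm _ _ _ hp' hq' hvan hdenz2
    -- reindexing equivalence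
    rw [ellGamma_eq _ _ (z^2), ellGamma_eq _ _ z, ellGamma_eq _ _ (-z),
      ellGamma_eq _ _ (sq*z), ellGamma_eq _ _ (-(sq*z)), ellGamma_eq _ _ (sp*z),
      ellGamma_eq _ _ (-(sp*z)), ellGamma_eq _ _ (sp*sq*z), ellGamma_eq _ _ (-(sp*sq*z))]
    have hME : Multipliable (fun x : (ℕ×ℕ) × (Fin 2 × Fin 2) =>
        egTerm (sp^2) (sq^2) (z^2) (dupEquiv x)) := by
      have h := dupEquiv.multipliable_iff.2 Mz2
      exact h
    calc (∏' jk : ℕ×ℕ, egTerm (sp^2) (sq^2) (z^2) jk)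
        = ∏' x : (ℕ×ℕ) × (Fin 2 × Fin 2), egTerm (sp^2) (sq^2) (z^2) (dupEquiv x) :=
          (dupEquiv.tprod_eq _).symm
      _ = ∏' (jk : ℕ×ℕ) (bc : Fin 2 × Fin 2), egTerm (sp^2) (sq^2) (z^2) (dupEquiv (jk, bc)) :=
          hME.tprod_prod' (fun _ => ⟨_, hasProd_fintype _⟩)
      _ = ∏' jk : ℕ×ℕ, (egTerm (sp^2) (sq^2) z jk * egTerm (sp^2) (sq^2) (-z) jk
            * egTerm (sp^2) (sq^2) (sq*z) jk * egTerm (sp^2) (sq^2) (-(sq*z)) jk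
            * egTerm (sp^2) (sq^2) (sp*z) jk * egTerm (sp^2) (sq^2) (-(sp*z)) jk
            * egTerm (sp^2) (sq^2) (sp*sq*z) jk * egTerm (sp^2) (sq^2) (-(sp*sq*z)) jk) := by
          refine tprod_congr fun jk => ?_
          rw [tprod_fintype]
          rw [Fintype.prod_prod_type]
          rw [Fin.prod_univ_two, Fin.prod_univ_two, Fin.prod_univ_two]
          simp only [dupEquiv_apply, Fin.val_zero, Fin.val_one, add_zero]
          have hk := keyT sp sq z jk.1 jk.2
          rw [show ((jk.1, jk.2) : ℕ × ℕ) = jk from rfl] at hk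
          linear_combination -hk
      _ = (∏' jk, egTerm (sp^2) (sq^2) z jk) * (∏' jk, egTerm (sp^2) (sq^2) (-z) jk)
            * (∏' jk, egTerm (sp^2) (sq^2) (sq*z) jk) * (∏' jk, egTerm (sp^2) (sq^2) (-(sq*z)) jk)
            * (∏' jk, egTerm (sp^2) (sq^2) (sp*z) jk) * (∏' jk, egTerm (sp^2) (sq^2) (-(sp*z)) jk)
            * (∏' jk, egTerm (sp^2) (sq^2) (sp*sq*z) jk)
            * (∏' jk, egTerm (sp^2) (sq^2) (-(sp*sq*z)) jk) := by
          rw [Multipliable.tprod_mul (((((((M1.mul M2).mul M3).mul M4).mul M5).mul M6).mul M7)) M8,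
            Multipliable.tprod_mul ((((((M1.mul M2).mul M3).mul M4).mul M5).mul M6)) M7,
            Multipliable.tprod_mul (((((M1.mul M2).mul M3).mul M4).mul M5)) M6,
            Multipliable.tprod_mul ((((M1.mul M2).mul M3).mul M4)) M5,
            Multipliable.tprod_mul (((M1.mul M2).mul M3)) M4,
            Multipliable.tprod_mul ((M1.mul M2)) M3,
            Multipliable.tprod_mul M1 M2]
end

section
/- Let K, n be positive integers, and for each a = 1,…,K let m^{(a)} ∈ ℤ^n and ε(m^{(a)}) ∈ ℤ. Suppose the Diophantine conditions hold: ∑_a ε(m^{(a)}) m_i^{(a)} m_j^{(a)} m_k^{(a)} = 0, ∑_a ε(m^{(a)}) m_i^{(a)} m_j^{(a)} = 0, and ∑_a ε(m^{(a)}) m_i^{(a)} = 0 for all 1 ≤ i,j,k ≤ n. Then for each i, the function h_i(x;q;p) = ∏_{a=1}^K θ_p(x^{m^{(a)}}; q)_{m_i^{(a)}}^{ε(m^{(a)})} (where x^{m^{(a)}} = ∏_l x_l^{m_l^{(a)}}) satisfies h_i(x_1,…,px_j,…,x_n;q;p) = h_i(x;q;p) for every j. -/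
open scoped BigOperators

/-- The elliptic shifted factorial `θ_p(x;q)_n` for `n ∈ ℤ`. -/
noncomputable def thetaPoch (p q x : ℂ) : ℤ → ℂ
  | Int.ofNat n => ∏ j ∈ Finset.range n, theta p (x * q ^ j)
  | Int.negSucc n => (∏ j ∈ Finset.range (n + 1), theta p (x * q ^ (-(j + 1 : ℤ))))⁻¹


lemma summable_log_poch (x p : ℂ) (hp : ‖p‖ < 1) :
    Summable fun n : ℕ => Complex.log (1 - x * p ^ n) := by
  have hgeo : Summable fun n : ℕ => (3/2 : ℝ) * (‖x‖ * ‖p‖ ^ n) :=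
    ((summable_geometric_of_lt_one (norm_nonneg p) hp).mul_left ‖x‖).mul_left _
  apply Summable.of_norm_bounded_eventually_nat hgeo
  have htend : Filter.Tendsto (fun n : ℕ => ‖x‖ * ‖p‖ ^ n) Filter.atTop (nhds 0) := by
    simpa using (tendsto_pow_atTop_nhds_zero_of_lt_one (norm_nonneg p) hp).const_mul ‖x‖
  filter_upwards [htend.eventually_le_const (by norm_num : (0:ℝ) < 1/2)] with n hn
  have hz : ‖-(x * p ^ n)‖ ≤ 1/2 := by
    rw [norm_neg, norm_mul, norm_pow]; exact hn
  have := Complex.norm_log_one_add_half_le_self hz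
  rw [show (1 : ℂ) + -(x * p ^ n) = 1 - x * p ^ n by ring] at this
  refine this.trans ?_
  rw [norm_neg, norm_mul, norm_pow]

lemma multipliable_poch_s16 (x p : ℂ) (hp : ‖p‖ < 1) :
    Multipliable fun n : ℕ => 1 - x * p ^ n := by
  by_cases hz : ∀ n : ℕ, 1 - x * p ^ n ≠ 0
  · exact Complex.multipliable_of_summable_log (summable_log_poch x p hp)
  · push_neg at hz
    obtain ⟨n0, hn0⟩ := hz
    refine ⟨0, ?_⟩
    rw [HasProd]
    have : ∀ᶠ s : Finset ℕ in Filter.atTop, (∏ i ∈ s, (1 - x * p ^ i)) = 0 := by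
      filter_upwards [Filter.eventually_ge_atTop ({n0} : Finset ℕ)] with s hs
      exact Finset.prod_eq_zero (hs (Finset.mem_singleton_self n0)) hn0
    exact Filter.Tendsto.congr' (by filter_upwards [this] with s hs; exact hs.symm)
      tendsto_const_nhds

set_option maxHeartbeats 1000000 in
lemma pochInf_shift (x p : ℂ) (hp : ‖p‖ < 1) :
    pochInf x p = (1 - x) * pochInf (x * p) p := by
  unfold pochInf
  have hm : Multipliable fun n : ℕ => 1 - x * p ^ (n + 1) := by
    have := multipliable_poch_s16 (x * p) p hp
    refine this.congr fun n => ?_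
    ring
  rw [tprod_eq_zero_mul' hm]
  simp only [pow_zero, mul_one]
  congr 1
  exact tprod_congr fun n => by ring

/-- quasi-periodicity -/
lemma theta_pmul (p x : ℂ) (hp : ‖p‖ < 1) (hp0 : p ≠ 0) (hx : x ≠ 0) :
    theta p (p * x) = -x⁻¹ * theta p x := by
  unfold theta
  have h1 : p / (p * x) = x⁻¹ := by field_simp
  have h2 : pochInf x⁻¹ p = (1 - x⁻¹) * pochInf (p / x) p := by
    have := pochInf_shift x⁻¹ p hp
    rwa [show x⁻¹ * p = p / x by field_simp] at this
  have h3 : pochInf x p = (1 - x) * pochInf (x * p) p := pochInf_shift x p hp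
  rw [h1, h2, h3, show x * p = p * x by ring]
  have : (1 - x⁻¹) = -x⁻¹ * (1 - x) := by field_simp; ring
  rw [this]; ring

/-- Half of `μ(μ-1)`. -/
def Ehalf (μ : ℤ) : ℤ := μ * (μ - 1) / 2
lemma two_Ehalf (μ : ℤ) : 2 * Ehalf μ = μ * (μ - 1) := by
  have h : (2 : ℤ) ∣ μ * (μ - 1) := by
    rcases Int.even_or_odd μ with h | h
    · exact Dvd.dvd.mul_right h.two_dvd _
    · rcases h with ⟨k, hk⟩
      exact Dvd.dvd.mul_left (⟨k, by omega⟩ : (2:ℤ) ∣ (μ - 1)) _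
  exact Int.mul_ediv_cancel' h

lemma theta_pzpow (p x : ℂ) (hp : ‖p‖ < 1) (hp0 : p ≠ 0) (hx : x ≠ 0) (μ : ℤ) :
    theta p (p ^ μ * x) = (-x⁻¹) ^ μ * p ^ (-Ehalf μ) * theta p x := by
  have hxinv : (-x⁻¹ : ℂ) ≠ 0 := by simp [hx]
  induction μ using Int.induction_on with
  | zero => simp [Ehalf]
  | succ n ih =>
    have hE : Ehalf (n + 1) = Ehalf n + n := by
      have h1 := two_Ehalf (n : ℤ); have h2 := two_Ehalf ((n : ℤ) + 1)
      have : ((n:ℤ) + 1) * (((n:ℤ) + 1) - 1) = (n:ℤ) * ((n:ℤ) - 1) + 2 * n := by ring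
      omega
    have harg : p ^ ((n : ℤ) + 1) * x = p * (p ^ (n : ℤ) * x) := by
      rw [zpow_add₀ hp0, zpow_one]; ring
    have hnx : p ^ (n : ℤ) * x ≠ 0 := mul_ne_zero (zpow_ne_zero _ hp0) hx
    rw [harg, theta_pmul p _ hp hp0 hnx, ih, hE]
    rw [show -(Ehalf (n:ℤ) + (n:ℤ)) = -Ehalf (n:ℤ) + (-(n:ℤ)) from by ring]
    rw [zpow_add₀ hp0 (-Ehalf (n:ℤ)) (-(n:ℤ)), zpow_add₀ hxinv (n:ℤ) 1, zpow_one]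
    have : (p ^ ((n:ℤ)) * x)⁻¹ = p ^ (-(n:ℤ)) * x⁻¹ := by
      rw [mul_inv, ← zpow_neg]
    rw [this]; ring
  | pred n ih =>
    have hE : Ehalf (-(n : ℤ) - 1) = Ehalf (-(n : ℤ)) + n + 1 := by
      have h1 := two_Ehalf (-(n : ℤ)); have h2 := two_Ehalf (-(n : ℤ) - 1)
      have : (-(n:ℤ) - 1) * ((-(n:ℤ) - 1) - 1) = (-(n:ℤ)) * ((-(n:ℤ)) - 1) + 2 * n + 2 := by ring
      omega
    have hnx : p ^ (-(n : ℤ) - 1) * x ≠ 0 := mul_ne_zero (zpow_ne_zero _ hp0) hx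
    have harg : p ^ (-(n : ℤ)) * x = p * (p ^ (-(n : ℤ) - 1) * x) := by
      rw [show (-(n:ℤ)) = 1 + (-(n:ℤ) - 1) from by ring, zpow_add₀ hp0, zpow_one]; ring
    have key := theta_pmul p (p ^ (-(n : ℤ) - 1) * x) hp hp0 hnx
    rw [← harg] at key
    -- key : theta p (p ^ (-(n:ℤ)) * x) = -(p ^ (-(n:ℤ)-1) * x)⁻¹ * theta p (p^(-(n:ℤ)-1) * x)
    have : theta p (p ^ (-(n:ℤ)-1) * x)
        = (-(p ^ (-(n:ℤ)-1) * x)) * theta p (p ^ (-(n:ℤ)) * x) := by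
      rw [key, ← mul_assoc]
      have hcan : -(p ^ (-(n:ℤ)-1) * x) * -(p ^ (-(n:ℤ)-1) * x)⁻¹ = 1 := by
        rw [neg_mul_neg, mul_inv_cancel₀ hnx]
      rw [hcan, one_mul]
    rw [this, ih, hE]
    rw [show -(Ehalf (-(n:ℤ)) + (n:ℤ) + 1) = -Ehalf (-(n:ℤ)) + (-(n:ℤ) - 1) from by ring,
      zpow_add₀ hp0 (-Ehalf (-(n:ℤ))) (-(n:ℤ) - 1),
      show (-(n:ℤ) - 1) = -(n:ℤ) + -1 from by ring,
      zpow_add₀ hxinv (-(n:ℤ)) (-1), zpow_neg_one]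
    have hinv : (-x⁻¹ : ℂ)⁻¹ = -x := by field_simp
    rw [hinv]
    ring

lemma Ehalf_add_one (μ : ℤ) : Ehalf (μ + 1) = Ehalf μ + μ := by
  have h1 := two_Ehalf μ; have h2 := two_Ehalf (μ + 1)
  have : (μ + 1) * ((μ + 1) - 1) = μ * (μ - 1) + 2 * μ := by ring
  omega

lemma Ehalf_neg (N : ℤ) : Ehalf (-N) = Ehalf (N + 1) := by
  have h1 := two_Ehalf (-N); have h2 := two_Ehalf (N + 1)
  have : (-N) * ((-N) - 1) = (N + 1) * ((N + 1) - 1) := by ring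
  omega

lemma sum_range_id_int (N : ℕ) : ∑ j ∈ Finset.range N, (j : ℤ) = Ehalf N := by
  induction N with
  | zero => simp [Ehalf]
  | succ n ih =>
    rw [Finset.sum_range_succ, ih, show ((n + 1 : ℕ) : ℤ) = (n : ℤ) + 1 by push_cast; ring,
      Ehalf_add_one]

section
variable (p q x : ℂ) (hp : ‖p‖ < 1) (hp0 : p ≠ 0) (hq0 : q ≠ 0) (hx : x ≠ 0)

include hp hp0 hq0 hx in
lemma theta_factor (μ c : ℤ) :
    theta p (p ^ μ * (x * q ^ c))
      = (-x⁻¹) ^ μ * q ^ (-(c * μ)) * p ^ (-Ehalf μ) * theta p (x * q ^ c) := by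
  rw [theta_pzpow p (x * q ^ c) hp hp0 (mul_ne_zero hx (zpow_ne_zero _ hq0)) μ]
  have h1 : -(x * q ^ c)⁻¹ = (-x⁻¹) * q ^ (-c) := by rw [mul_inv, zpow_neg]; ring
  rw [h1, mul_zpow, ← zpow_mul, show (-c) * μ = -(c * μ) by ring]

include hp hp0 hq0 hx in
lemma prod_theta_pzpow (μ : ℤ) (c : ℕ → ℤ) (N : ℕ) :
    ∏ j ∈ Finset.range N, theta p (p ^ μ * (x * q ^ c j))
      = (-x⁻¹) ^ (μ * N) * q ^ (-(μ * ∑ j ∈ Finset.range N, c j))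
          * p ^ (-(N * Ehalf μ)) * ∏ j ∈ Finset.range N, theta p (x * q ^ c j) := by
  have hxi : (-x⁻¹ : ℂ) ≠ 0 := by simp [hx]
  induction N with
  | zero => simp
  | succ n ih =>
    rw [Finset.prod_range_succ, ih, theta_factor p q x hp hp0 hq0 hx μ (c n),
      Finset.sum_range_succ, Finset.prod_range_succ]
    rw [show μ * ((n + 1 : ℕ) : ℤ) = μ * (n : ℤ) + μ by push_cast; ring,
      show -(μ * ((∑ j ∈ Finset.range n, c j) + c n)) =
        -(μ * ∑ j ∈ Finset.range n, c j) + -(c n * μ) by ring,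
      show -(((n + 1 : ℕ) : ℤ) * Ehalf μ) = -((n : ℤ) * Ehalf μ) + -Ehalf μ by push_cast; ring,
      zpow_add₀ hxi, zpow_add₀ hq0, zpow_add₀ hp0]
    ring

include hp hp0 hq0 hx in
lemma thetaPoch_pzpow (μ k : ℤ) :
    thetaPoch p q (p ^ μ * x) k
      = (-x⁻¹) ^ (μ * k) * q ^ (-(μ * Ehalf k)) * p ^ (-(k * Ehalf μ)) * thetaPoch p q x k := by
  cases k with
  | ofNat N =>
    show (∏ j ∈ Finset.range N, theta p (p ^ μ * x * q ^ j)) = _ * (∏ j ∈ Finset.range N, theta p (x * q ^ j))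
    have hc : ∀ j ∈ Finset.range N, theta p (p ^ μ * x * q ^ j)
        = theta p (p ^ μ * (x * q ^ (j : ℤ))) := by
      intro j _; rw [mul_assoc, zpow_natCast]
    rw [Finset.prod_congr rfl hc, prod_theta_pzpow p q x hp hp0 hq0 hx μ (fun j => (j : ℤ)) N,
      sum_range_id_int]
    have h2 : ∀ j ∈ Finset.range N, theta p (x * q ^ (j : ℤ)) = theta p (x * q ^ j) := by
      intro j _; rw [zpow_natCast]
    rw [Finset.prod_congr rfl h2]
    norm_cast
  | negSucc N =>
    show (∏ j ∈ Finset.range (N + 1), theta p (p ^ μ * x * q ^ (-(j + 1 : ℤ))))⁻¹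
      = _ * (∏ j ∈ Finset.range (N + 1), theta p (x * q ^ (-(j + 1 : ℤ))))⁻¹
    have hxi : (-x⁻¹ : ℂ) ≠ 0 := by simp [hx]
    have hc : ∀ j ∈ Finset.range (N + 1), theta p (p ^ μ * x * q ^ (-(j + 1 : ℤ)))
        = theta p (p ^ μ * (x * q ^ (-(j + 1 : ℤ)))) := by
      intro j _; rw [mul_assoc]
    rw [Finset.prod_congr rfl hc,
      prod_theta_pzpow p q x hp hp0 hq0 hx μ (fun j => -(j + 1 : ℤ)) (N + 1)]
    have hsum : ∀ M : ℕ, ∑ j ∈ Finset.range M, (-(j + 1 : ℤ)) = -Ehalf ((M + 1 : ℕ) : ℤ) := by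
      intro M
      induction M with
      | zero => simp [Ehalf]
      | succ M ihM =>
        rw [Finset.sum_range_succ, ihM,
          show (((M + 1 : ℕ) + 1 : ℕ) : ℤ) = ((M + 1 : ℕ) : ℤ) + 1 by push_cast; ring,
          Ehalf_add_one]
        push_cast; ring
    rw [hsum (N + 1)]
    have hEneg : Ehalf (Int.negSucc N) = Ehalf ((N + 1 + 1 : ℕ) : ℤ) := by
      rw [Int.negSucc_eq]
      rw [show (-((N : ℤ) + 1)) = -(((N : ℤ) + 1)) by ring, Ehalf_neg]
      push_cast; ring_nf
    rw [mul_inv, mul_inv, mul_inv, ← zpow_neg, ← zpow_neg, ← zpow_neg, hEneg]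
    rw [Int.negSucc_eq]
    push_cast
    ring_nf
end

lemma prod_zpow_sum {α : Type*} (c : ℂ) (hc : c ≠ 0) (s : Finset α) (f : α → ℤ) :
    ∏ a ∈ s, c ^ f a = c ^ (∑ a ∈ s, f a) := by
  induction s using Finset.cons_induction with
  | empty => simp
  | cons a s ha ih => rw [Finset.prod_cons, Finset.sum_cons, ih, zpow_add₀ hc]

theorem certificate_elliptic_in_x (K n : ℕ) (hK : 0 < K) (hn : 0 < n)
    (m : Fin K → Fin n → ℤ) (ε : Fin K → ℤ)
    (p q : ℂ) (hp : ‖p‖ < 1) (hp0 : p ≠ 0) (hq0 : q ≠ 0)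
    (x : Fin n → ℂ) (hx : ∀ l, x l ≠ 0)
    (hreg : ∀ (a : Fin K) (k s : ℤ),
      theta p ((∏ l, x l ^ m a l) * q ^ k * p ^ s) ≠ 0)
    (h3 : ∀ i j k : Fin n, ∑ a, ε a * m a i * m a j * m a k = 0)
    (h2 : ∀ i j : Fin n, ∑ a, ε a * m a i * m a j = 0)
    (h1 : ∀ i : Fin n, ∑ a, ε a * m a i = 0) :
    ∀ i j : Fin n,
      (∏ a, thetaPoch p q (∏ l, (Function.update x j (p * x j)) l ^ m a l) (m a i) ^ ε a)
        = ∏ a, thetaPoch p q (∏ l, x l ^ m a l) (m a i) ^ ε a := by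
  intro i j
  have hpn : ‖p‖ < 1 := hp
  set X : Fin K → ℂ := fun a => ∏ l, x l ^ m a l with hX
  have hX0 : ∀ a, X a ≠ 0 := fun a => Finset.prod_ne_zero_iff.2 fun l _ => zpow_ne_zero _ (hx l)
  -- step 1: the updated monomial
  have hupd : ∀ a, (∏ l, (Function.update x j (p * x j)) l ^ m a l) = p ^ (m a j) * X a := by
    intro a
    have hfun : ∀ l, (Function.update x j (p * x j)) l ^ m a l
        = Function.update (fun l => x l ^ m a l) j ((p * x j) ^ m a j) l := by
      intro l
      by_cases hl : l = j
      · subst hl; simp [Function.update_self]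
      · simp [Function.update_of_ne hl]
    rw [Finset.prod_congr rfl (fun l _ => hfun l),
      Finset.prod_update_of_mem (Finset.mem_univ j), mul_zpow]
    have hXsplit : X a = x j ^ m a j * ∏ l ∈ Finset.univ.erase j, x l ^ m a l := by
      simp only [hX]
      rw [← Finset.prod_erase_mul Finset.univ _ (Finset.mem_univ j)]
      ring
    rw [hXsplit, Finset.erase_eq]; ring
  -- step 2: rewrite each factor
  have hfac : ∀ a, thetaPoch p q (∏ l, (Function.update x j (p * x j)) l ^ m a l) (m a i)
      = ((-(X a)⁻¹) ^ (m a j * m a i) * q ^ (-(m a j * Ehalf (m a i)))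
          * p ^ (-(m a i * Ehalf (m a j)))) * thetaPoch p q (X a) (m a i) := by
    intro a
    rw [hupd a, thetaPoch_pzpow p q (X a) hpn hp0 hq0 (hX0 a) (m a j) (m a i)]
  calc
    (∏ a, thetaPoch p q (∏ l, (Function.update x j (p * x j)) l ^ m a l) (m a i) ^ ε a)
      = ∏ a, (((-(X a)⁻¹) ^ (m a j * m a i) * q ^ (-(m a j * Ehalf (m a i)))
          * p ^ (-(m a i * Ehalf (m a j)))) ^ ε a * thetaPoch p q (X a) (m a i) ^ ε a) := by
        refine Finset.prod_congr rfl fun a _ => ?_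
        rw [hfac a, mul_zpow]
    _ = (∏ a, ((-(X a)⁻¹) ^ (m a j * m a i) * q ^ (-(m a j * Ehalf (m a i)))
          * p ^ (-(m a i * Ehalf (m a j)))) ^ ε a)
        * ∏ a, thetaPoch p q (X a) (m a i) ^ ε a := Finset.prod_mul_distrib
    _ = ∏ a, thetaPoch p q (X a) (m a i) ^ ε a := by
        rw [show (∏ a, ((-(X a)⁻¹) ^ (m a j * m a i) * q ^ (-(m a j * Ehalf (m a i)))
            * p ^ (-(m a i * Ehalf (m a j)))) ^ ε a) = 1 from ?_, one_mul]
        -- split the three factors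
        have hsplit : ∀ a : Fin K, ((-(X a)⁻¹) ^ (m a j * m a i) * q ^ (-(m a j * Ehalf (m a i)))
            * p ^ (-(m a i * Ehalf (m a j)))) ^ ε a
            = ((-(X a)⁻¹) ^ (m a j * m a i)) ^ ε a * (q ^ (-(m a j * Ehalf (m a i)))) ^ ε a
              * (p ^ (-(m a i * Ehalf (m a j)))) ^ ε a := by
          intro a; rw [mul_zpow, mul_zpow]
        rw [Finset.prod_congr rfl fun a _ => hsplit a, Finset.prod_mul_distrib,
          Finset.prod_mul_distrib]
        have hq1 : (∏ a, (q ^ (-(m a j * Ehalf (m a i)))) ^ ε a) = 1 := by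
          have : ∀ a : Fin K, (q ^ (-(m a j * Ehalf (m a i)))) ^ ε a
              = q ^ (-(m a j * Ehalf (m a i)) * ε a) := fun a => (zpow_mul q _ _).symm
          rw [Finset.prod_congr rfl fun a _ => this a, prod_zpow_sum q hq0]
          have hzero : ∑ a, (-(m a j * Ehalf (m a i)) * ε a) = 0 := by
            have key : ∀ a : Fin K, 2 * (-(m a j * Ehalf (m a i)) * ε a)
                = ε a * m a i * m a j - ε a * m a i * m a i * m a j := by
              intro a
              have hT := two_Ehalf (m a i)
              linear_combination (-(m a j) * ε a) * hT
            have hs : 2 * ∑ a, (-(m a j * Ehalf (m a i)) * ε a)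
                = (∑ a, ε a * m a i * m a j) - (∑ a, ε a * m a i * m a i * m a j) := by
              rw [Finset.mul_sum, ← Finset.sum_sub_distrib]
              exact Finset.sum_congr rfl fun a _ => key a
            rw [h2 i j, h3 i i j] at hs
            omega
          rw [hzero, zpow_zero]
        have hp1 : (∏ a, (p ^ (-(m a i * Ehalf (m a j)))) ^ ε a) = 1 := by
          have : ∀ a : Fin K, (p ^ (-(m a i * Ehalf (m a j)))) ^ ε a
              = p ^ (-(m a i * Ehalf (m a j)) * ε a) := fun a => (zpow_mul p _ _).symm
          rw [Finset.prod_congr rfl fun a _ => this a, prod_zpow_sum p hp0]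
          have hzero : ∑ a, (-(m a i * Ehalf (m a j)) * ε a) = 0 := by
            have key : ∀ a : Fin K, 2 * (-(m a i * Ehalf (m a j)) * ε a)
                = ε a * m a i * m a j - ε a * m a i * m a j * m a j := by
              intro a
              have hT := two_Ehalf (m a j)
              linear_combination (-(m a i) * ε a) * hT
            have hs : 2 * ∑ a, (-(m a i * Ehalf (m a j)) * ε a)
                = (∑ a, ε a * m a i * m a j) - (∑ a, ε a * m a i * m a j * m a j) := by
              rw [Finset.mul_sum, ← Finset.sum_sub_distrib]
              exact Finset.sum_congr rfl fun a _ => key a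
            rw [h2 i j, h3 i j j] at hs
            omega
          rw [hzero, zpow_zero]
        have hx1 : (∏ a, ((-(X a)⁻¹) ^ (m a j * m a i)) ^ ε a) = 1 := by
          have hsplit2 : ∀ a : Fin K, ((-(X a)⁻¹) ^ (m a j * m a i)) ^ ε a
              = (-1 : ℂ) ^ (m a j * m a i * ε a)
                * ∏ l, x l ^ (-(m a l * (m a j * m a i * ε a))) := by
            intro a
            have h1' : (-(X a)⁻¹ : ℂ) = (-1) * (X a)⁻¹ := by ring
            rw [← zpow_mul, h1', mul_zpow]
            congr 1
            have hXinv : (X a)⁻¹ = ∏ l, x l ^ (-(m a l)) := by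
              rw [hX, ← Finset.prod_inv_distrib]
              exact Finset.prod_congr rfl fun l _ => (zpow_neg _ _).symm
            rw [hXinv, ← Finset.prod_zpow]
            refine Finset.prod_congr rfl fun l _ => ?_
            rw [← zpow_mul]
            congr 1
            ring
          rw [Finset.prod_congr rfl fun a _ => hsplit2 a, Finset.prod_mul_distrib]
          have hsign : (∏ a, (-1 : ℂ) ^ (m a j * m a i * ε a)) = 1 := by
            rw [prod_zpow_sum (-1 : ℂ) (by norm_num)]
            have : ∑ a, m a j * m a i * ε a = 0 := by
              rw [← h2 i j]
              exact Finset.sum_congr rfl fun a _ => by ring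
            rw [this, zpow_zero]
          have hxs : (∏ a, ∏ l, x l ^ (-(m a l * (m a j * m a i * ε a)))) = 1 := by
            rw [Finset.prod_comm]
            refine Finset.prod_eq_one fun l _ => ?_
            rw [prod_zpow_sum (x l) (hx l)]
            have : ∑ a, (-(m a l * (m a j * m a i * ε a))) = 0 := by
              have := h3 i j l
              have hc : ∀ a : Fin K, (-(m a l * (m a j * m a i * ε a)))
                  = -(ε a * m a i * m a j * m a l) := fun a => by ring
              rw [Finset.sum_congr rfl fun a _ => hc a, Finset.sum_neg_distrib, this, neg_zero]
            rw [this, zpow_zero]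
          rw [hsign, hxs, mul_one]
        rw [hq1, hp1, hx1, one_mul, one_mul]
end
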